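/- For every integer n ≥ 1, the balanced circuits of the biased graph K^osc(n) are precisely the oscillating circuits of K_n with its usual vertex ordering on [n]. -/

import Mathlib

open SimpleGraph

namespace Paper

variable {V : Type*}

/-- The edge set of a walk, as a set of edges. -/
def walkEdges {G : SimpleGraph V} {x y : V} (p : G.Walk x y) : Set (Sym2 V) :=
  {e | e ∈ p.edges}

/-- `C` is a circuit of `G`, i.e. the edge set of a cycle of `G`. -/
def IsCircuit (G : SimpleGraph V) (C : Set (Sym2 V)) : Prop :=
  ∃ (v : V) (w : G.Walk v v), w.IsCycle ∧ C = walkEdges w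

/-- The set of vertices covered by a set of edges. -/
def circVerts (C : Set (Sym2 V)) : Set V := {v | ∃ e ∈ C, v ∈ e}

/-- An edge set is nonspanning if it misses some vertex. -/
def Nonspanning (C : Set (Sym2 V)) : Prop := circVerts C ≠ Set.univ

/-- Three pairwise edge-disjoint and internally vertex-disjoint `x`-`y` paths,
forming a theta subgraph. -/
def IsThetaConfig (G : SimpleGraph V) {x y : V} (p₁ p₂ p₃ : G.Walk x y) : Prop :=
  x ≠ y ∧ p₁.IsPath ∧ p₂.IsPath ∧ p₃.IsPath ∧
  (∀ e, e ∈ p₁.edges → e ∉ p₂.edges) ∧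
  (∀ e, e ∈ p₁.edges → e ∉ p₃.edges) ∧
  (∀ e, e ∈ p₂.edges → e ∉ p₃.edges) ∧
  (∀ v, v ∈ p₁.support → v ∈ p₂.support → v = x ∨ v = y) ∧
  (∀ v, v ∈ p₁.support → v ∈ p₃.support → v = x ∨ v = y) ∧
  (∀ v, v ∈ p₂.support → v ∈ p₃.support → v = x ∨ v = y)

/-- No theta subgraph of `G` contains exactly two circuits of `B`: the three
circuits of a theta subgraph are the unions of pairs of its three paths. -/
def ThetaProperty (G : SimpleGraph V) (B : Set (Set (Sym2 V))) : Prop :=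
  ∀ ⦃x y : V⦄ (p₁ p₂ p₃ : G.Walk x y), IsThetaConfig G p₁ p₂ p₃ →
    ¬ ((walkEdges p₁ ∪ walkEdges p₂ ∈ B ∧ walkEdges p₁ ∪ walkEdges p₃ ∈ B ∧
          walkEdges p₂ ∪ walkEdges p₃ ∉ B) ∨
       (walkEdges p₁ ∪ walkEdges p₂ ∈ B ∧ walkEdges p₁ ∪ walkEdges p₃ ∉ B ∧
          walkEdges p₂ ∪ walkEdges p₃ ∈ B) ∨
       (walkEdges p₁ ∪ walkEdges p₂ ∉ B ∧ walkEdges p₁ ∪ walkEdges p₃ ∈ B ∧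
          walkEdges p₂ ∪ walkEdges p₃ ∈ B))

/-- `(G, B)` is a biased graph. -/
def IsBiased (G : SimpleGraph V) (B : Set (Set (Sym2 V))) : Prop :=
  (∀ C ∈ B, IsCircuit G C) ∧ ThetaProperty G B

/-- The subgraph of `G` induced on the vertex set `X` (kept on the same vertex type). -/
def inducedOn (G : SimpleGraph V) (X : Set V) : SimpleGraph V where
  Adj u v := G.Adj u v ∧ u ∈ X ∧ v ∈ X
  symm := ⟨fun u v h => ⟨h.1.symm, h.2.2, h.2.1⟩⟩
  loopless := ⟨fun u h => G.irrefl h.1⟩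

/-- The gain of a walk with respect to a gain function `γ` (an antisymmetric
function recording an orientation together with a group labelling). -/
def walkGain {Γ : Type*} [Group Γ] (γ : V → V → Γ) {G : SimpleGraph V}
    {x y : V} (p : G.Walk x y) : Γ :=
  (p.darts.map fun d => γ d.toProd.1 d.toProd.2).prod

/-- `(G, B)` arises from a `Γ`-labelled graph: some orientation and `Γ`-labelling of `G`
(encoded as an antisymmetric gain function) whose balanced circuits are exactly `B`. -/
def ArisesFrom (G : SimpleGraph V) (B : Set (Set (Sym2 V))) (Γ : Type*) [Group Γ] : Prop :=
  ∃ γ : V → V → Γ, (∀ u v, γ u v * γ v u = 1) ∧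
    ∀ (v : V) (w : G.Walk v v), w.IsCycle → (walkEdges w ∈ B ↔ walkGain γ w = 1)

/-- `(G, B)` arises from a `Γ`-labelled graph for some finite cyclic group `Γ`. -/
def ArisesFromFiniteCyclic (G : SimpleGraph V) (B : Set (Set (Sym2 V))) : Prop :=
  ∃ (Γ : Type) (instΓ : Group Γ), Finite Γ ∧ (letI := instΓ; IsCyclic Γ ∧ ArisesFrom G B Γ)

/-- The edge set of the cycle visiting the entries of the list `L` in cyclic order. -/
def cycEdges (L : List V) : Set (Sym2 V) :=
  {e | ∃ i : Fin L.length,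
    e = s(L.get i, L.get ⟨(i.val + 1) % L.length, Nat.mod_lt _ i.pos⟩)}

section Ordered

variable [LinearOrder V]

/-- The edge set `{v₁v₂, v₂v₃, v₃v₄, v₄v₁}` of a 4-circuit. -/
def Circ4 (v₁ v₂ v₃ v₄ : V) : Set (Sym2 V) := {s(v₁, v₂), s(v₂, v₃), s(v₃, v₄), s(v₄, v₁)}

/-- A 1324-circuit: the canonical ordering `v₁,v₂,v₃,v₄` satisfies `v₁<v₃<v₂<v₄`. -/
def Is1324 (C : Set (Sym2 V)) : Prop :=
  ∃ v₁ v₂ v₃ v₄ : V, v₁ < v₃ ∧ v₃ < v₂ ∧ v₂ < v₄ ∧ C = Circ4 v₁ v₂ v₃ v₄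

/-- A 1243-circuit: the canonical ordering `v₁,v₂,v₃,v₄` satisfies `v₁<v₂<v₄<v₃`. -/
def Is1243 (C : Set (Sym2 V)) : Prop :=
  ∃ v₁ v₂ v₃ v₄ : V, v₁ < v₂ ∧ v₂ < v₄ ∧ v₄ < v₃ ∧ C = Circ4 v₁ v₂ v₃ v₄

/-- A circuit is oscillating if every vertex is either below both of its neighbours
in the circuit or above both of them. -/
def Oscillating (C : Set (Sym2 V)) : Prop :=
  ∀ ⦃v a b : V⦄, s(v, a) ∈ C → s(v, b) ∈ C → a ≠ b → (v < a ∧ v < b) ∨ (a < v ∧ b < v)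

/-- The number of increasing steps of a walk minus the number of decreasing steps;
for a cycle walk `w` this is `δ₀` of the corresponding circuit, and `(walkDelta w).natAbs`
is the parameter `δ`. -/
def walkDelta {G : SimpleGraph V} {x y : V} (p : G.Walk x y) : ℤ :=
  ((p.darts.filter fun d => d.toProd.1 < d.toProd.2).length : ℤ) -
  ((p.darts.filter fun d => d.toProd.2 < d.toProd.1).length : ℤ)

/-- The gain of a walk with respect to the edge labelling `γ` and the orientation of
the complete graph in which each edge is oriented from its smaller end to its larger end. -/
def upGain {Γ : Type*} [Group Γ] (γ : Sym2 V → Γ) {G : SimpleGraph V}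
    {x y : V} (p : G.Walk x y) : Γ :=
  (p.darts.map fun d =>
    if d.toProd.1 < d.toProd.2 then γ s(d.toProd.1, d.toProd.2)
    else (γ s(d.toProd.1, d.toProd.2))⁻¹).prod

/-- `T` is the edge set of a theta subgraph of `G`. -/
def IsTheta (G : SimpleGraph V) (T : Set (Sym2 V)) : Prop :=
  ∃ (x y : V) (p₁ p₂ p₃ : G.Walk x y), IsThetaConfig G p₁ p₂ p₃ ∧
    T = walkEdges p₁ ∪ walkEdges p₂ ∪ walkEdges p₃

/-- Adjacency in the graph `Ω(G)`: a theta subgraph contains both circuits together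
with a 1243- or 1324-circuit. -/
def OmegaAdj (G : SimpleGraph V) (C₁ C₂ : Set (Sym2 V)) : Prop :=
  C₁ ≠ C₂ ∧ ∃ T, IsTheta G T ∧ C₁ ⊆ T ∧ C₂ ⊆ T ∧ ∃ D, (Is1243 D ∨ Is1324 D) ∧ D ⊆ T

/-- The graph `Ω(G)` on the nonspanning circuits of `G`. -/
def Omega (G : SimpleGraph V) :
    SimpleGraph {C : Set (Sym2 V) // IsCircuit G C ∧ Nonspanning C} where
  Adj C₁ C₂ := OmegaAdj G C₁.1 C₂.1
  symm := by
    constructor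
    rintro C₁ C₂ ⟨hne, T, hT, h1, h2, hD⟩
    exact ⟨hne.symm, T, hT, h2, h1, hD⟩
  loopless := by
    constructor
    rintro C ⟨hne, -⟩
    exact hne rfl

/-- Two circuits are similar if the order-preserving bijection between their vertex
sets carries one to the other. -/
def Similar (C₁ C₂ : Set (Sym2 V)) : Prop :=
  ∃ φ : V → V, Set.BijOn φ (circVerts C₁) (circVerts C₂) ∧
    StrictMonoOn φ (circVerts C₁) ∧ C₂ = Sym2.map φ '' C₁

end Ordered

/-- The 4-uniform Ramsey property for `N` with target sizes `a, b, c, d`. -/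
def HasRamsey4 (N a b c d : ℕ) : Prop :=
  ∀ χ : Finset (Fin N) → Fin 4, ∃ (i : Fin 4) (X : Finset (Fin N)),
    X.card = ![a, b, c, d] i ∧ ∀ Q ⊆ X, Q.card = 4 → χ Q = i

/-- The 4-colour Ramsey number for 4-uniform hypergraphs. -/
noncomputable def R4 (a b c d : ℕ) : ℕ := sInf {N | HasRamsey4 N a b c d}

end Paper

namespace Paper


-- helper: sum of signed indicators vs filter lengths
lemma sum_map_ind {α : Type*} (P Q : α → Prop) [DecidablePred P] [DecidablePred Q]
    (L : List α) :
    (L.map fun a => ((if P a then (1:ℤ) else 0) - (if Q a then (1:ℤ) else 0))).sum =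
      ((L.filter fun a => P a).length : ℤ) - ((L.filter fun a => Q a).length : ℤ) := by
  induction L with
  | nil => simp
  | cons a L ih =>
    by_cases hP : P a <;> by_cases hQ : Q a <;>
      simp [List.filter_cons, hP, hQ, ih] <;> ring

lemma length_filter_and_le {α : Type*} (P Q : α → Prop) [DecidablePred P] [DecidablePred Q]
    (L : List α) :
    (L.filter fun a => P a ∧ Q a).length ≤ (L.filter fun a => Q a).length := by
  have hfun : (fun a => decide (P a ∧ Q a)) = fun a => decide (P a) && decide (Q a) := by
    funext a; by_cases hP : P a <;> by_cases hQ : Q a <;> simp [hP, hQ]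
  rw [hfun]
  induction L with
  | nil => simp
  | cons a L ih =>
    by_cases hP : P a <;> by_cases hQ : Q a <;>
      simp [List.filter_cons, hP, hQ] <;> omega


lemma length_filter_eq_count {α β : Type*} [DecidableEq β] (L : List α) (f : α → β) (b : β) :
    (L.filter fun a => f a = b).length = (L.map f).count b := by
  induction L with
  | nil => simp
  | cons a L ih =>
    by_cases h : f a = b <;> simp [List.filter_cons, h, ih, List.count_cons]

section Main

variable {n : ℕ} {Γ : Type} [CommGroup Γ]

/-- the signed contribution of a dart to the exponent of vertex `u`. -/
def dartContrib (u : Fin n) (d : (completeGraph (Fin n)).Dart) : ℤ :=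
  (if d.toProd.1 < d.toProd.2 ∧ d.toProd.2 = u then 1 else 0) -
  (if d.toProd.2 < d.toProd.1 ∧ d.toProd.1 = u then 1 else 0)

/-- total exponent of vertex `u` over a list of darts. -/
def listE (L : List ((completeGraph (Fin n)).Dart)) (u : Fin n) : ℤ :=
  (L.map (dartContrib u)).sum

lemma dartContrib_eq_prod (γ : Sym2 (Fin n) → Γ) (g : Fin n → Γ)
    (hg : ∀ a b : Fin n, a < b → γ s(a, b) = g b)
    (d : (completeGraph (Fin n)).Dart) :
    (if d.toProd.1 < d.toProd.2 then γ s(d.toProd.1, d.toProd.2)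
      else (γ s(d.toProd.1, d.toProd.2))⁻¹) = ∏ u : Fin n, g u ^ dartContrib u d := by
  have hne : d.toProd.1 ≠ d.toProd.2 := d.adj
  rcases lt_or_gt_of_ne hne with h | h
  · rw [if_pos h]
    rw [hg _ _ h]
    rw [Finset.prod_eq_single d.toProd.2]
    · simp [dartContrib, h, asymm h]
    · intro u _ hu
      simp [dartContrib, Ne.symm hu, fun h' : d.toProd.2 < d.toProd.1 => asymm h h']
    · simp
  · rw [if_neg (asymm h)]
    have : γ s(d.toProd.1, d.toProd.2) = g d.toProd.1 := by
      rw [Sym2.eq_swap]; exact hg _ _ h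
    rw [this]
    rw [Finset.prod_eq_single d.toProd.1]
    · simp [dartContrib, h, asymm h]
    · intro u _ hu
      simp [dartContrib, Ne.symm hu]
      intro h'; exact absurd h' (asymm h)
    · simp
  
lemma upGain_eq_prod (γ : Sym2 (Fin n) → Γ) (g : Fin n → Γ)
    (hg : ∀ a b : Fin n, a < b → γ s(a, b) = g b)
    (L : List ((completeGraph (Fin n)).Dart)) :
    (L.map fun d => if d.toProd.1 < d.toProd.2 then γ s(d.toProd.1, d.toProd.2)
      else (γ s(d.toProd.1, d.toProd.2))⁻¹).prod = ∏ u : Fin n, g u ^ listE L u := by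
  induction L with
  | nil => simp [listE]
  | cons d L ih =>
    have hstep : ∀ u : Fin n, listE (d :: L) u = dartContrib u d + listE L u := by
      intro u; simp [listE]
    simp only [List.map_cons, List.prod_cons, ih, dartContrib_eq_prod γ g hg d]
    rw [← Finset.prod_mul_distrib]
    refine Finset.prod_congr rfl fun u _ => ?_
    rw [hstep u, zpow_add]

lemma prod_zpow_eq_one_iff (S : Finset Γ)
    (hSprod : ∀ A B : Finset Γ, A ⊆ S → B ⊆ S → A.prod id = B.prod id → A = B)
    (g : Fin n → Γ) (f : Fin n → ℤ) (P : Fin n → Prop)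
    (hmem : ∀ u, P u → g u ∈ S)
    (hinj : ∀ u v, P u → P v → g u = g v → u = v)
    (hf : ∀ u, f u = 0 ∨ f u = 1 ∨ f u = -1)
    (hfP : ∀ u, f u ≠ 0 → P u)
    (h1 : ∏ u : Fin n, g u ^ f u = 1) : ∀ u, f u = 0 := by
  classical
  set A : Finset (Fin n) := Finset.univ.filter fun u => f u = 1 with hA
  set B : Finset (Fin n) := Finset.univ.filter fun u => f u = -1 with hB
  have hPA : ∀ u ∈ A, P u := by
    intro u hu; rw [hA, Finset.mem_filter] at hu; exact hfP u (by rw [hu.2]; norm_num)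
  have hPB : ∀ u ∈ B, P u := by
    intro u hu; rw [hB, Finset.mem_filter] at hu; exact hfP u (by rw [hu.2]; norm_num)
  have hprod : ∏ u : Fin n, g u ^ f u = (∏ u ∈ A, g u) * (∏ u ∈ B, g u)⁻¹ := by
    rw [← Finset.prod_filter_mul_prod_filter_not Finset.univ (fun u => f u = 1)
      (fun u => g u ^ f u)]
    have h2 : ∏ u ∈ A, g u ^ f u = ∏ u ∈ A, g u := by
      refine Finset.prod_congr rfl fun u hu => ?_
      rw [hA, Finset.mem_filter] at hu; rw [hu.2, zpow_one]
    have h3 : ∏ u ∈ Finset.univ.filter (fun u => ¬ f u = 1), g u ^ f u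
        = (∏ u ∈ B, g u)⁻¹ := by
      rw [← Finset.prod_filter_mul_prod_filter_not
        (Finset.univ.filter (fun u => ¬ f u = 1)) (fun u => f u = -1) (fun u => g u ^ f u)]
      rw [Finset.filter_filter, Finset.filter_filter]
      have e1 : Finset.univ.filter (fun u => ¬ f u = 1 ∧ f u = -1) = B := by
        rw [hB]; apply Finset.filter_congr; intro u _
        constructor
        · rintro ⟨-, h⟩; exact h
        · intro h; exact ⟨by rw [h]; norm_num, h⟩
      have e2 : ∏ u ∈ Finset.univ.filter (fun u => ¬ f u = 1 ∧ ¬ f u = -1),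
          g u ^ f u = 1 := by
        apply Finset.prod_eq_one
        intro u hu
        rw [Finset.mem_filter] at hu
        have h0 : f u = 0 := by rcases hf u with h | h | h <;> tauto
        rw [h0, zpow_zero]
      rw [e1, e2, mul_one]
      rw [show (∏ u ∈ B, g u)⁻¹ = ∏ u ∈ B, (g u)⁻¹ by rw [Finset.prod_inv_distrib]]
      refine Finset.prod_congr rfl fun u hu => ?_
      rw [hB, Finset.mem_filter] at hu
      rw [hu.2, zpow_neg_one]
    rw [h2, h3]
  rw [hprod] at h1
  have hAB : ∏ u ∈ A, g u = ∏ u ∈ B, g u := by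
    have := mul_inv_eq_one.mp h1; exact this
  have hprodA : (A.image g).prod id = ∏ u ∈ A, g u := by
    rw [Finset.prod_image (fun u hu v hv h => hinj u v (hPA u hu) (hPA v hv) h)]
    rfl
  have hprodB : (B.image g).prod id = ∏ u ∈ B, g u := by
    rw [Finset.prod_image (fun u hu v hv h => hinj u v (hPB u hu) (hPB v hv) h)]
    rfl
  have hsubA : A.image g ⊆ S := by
    intro x hx; rw [Finset.mem_image] at hx; obtain ⟨u, hu, rfl⟩ := hx
    exact hmem u (hPA u hu)
  have hsubB : B.image g ⊆ S := by
    intro x hx; rw [Finset.mem_image] at hx; obtain ⟨u, hu, rfl⟩ := hx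
    exact hmem u (hPB u hu)
  have himg : A.image g = B.image g :=
    hSprod _ _ hsubA hsubB (by rw [hprodA, hprodB, hAB])
  intro u
  rcases hf u with h | h | h
  · exact h
  · exfalso
    have huA : u ∈ A := by rw [hA, Finset.mem_filter]; exact ⟨Finset.mem_univ u, h⟩
    have : g u ∈ B.image g := by rw [← himg]; exact Finset.mem_image_of_mem g huA
    rw [Finset.mem_image] at this
    obtain ⟨v, hv, hgv⟩ := this
    have : v = u := hinj v u (hPB v hv) (hPA u huA) hgv
    rw [hB, Finset.mem_filter] at hv
    rw [this, h] at hv; norm_num at hv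
  · exfalso
    have huB : u ∈ B := by rw [hB, Finset.mem_filter]; exact ⟨Finset.mem_univ u, h⟩
    have : g u ∈ A.image g := by rw [himg]; exact Finset.mem_image_of_mem g huB
    rw [Finset.mem_image] at this
    obtain ⟨v, hv, hgv⟩ := this
    have : v = u := hinj v u (hPA v hv) (hPB u huB) hgv
    rw [hA, Finset.mem_filter] at hv
    rw [this, h] at hv; norm_num at hv

end Main

/-- the balanced circuits of `K^osc(n)` are exactly the oscillating circuits.
Here the labelling of the upward orientation of `K_n` assigns elements of a set `S`
(no two subsets of which have equal products) to the edges so that two edges get the same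
label iff they have the same larger end. -/
theorem statement4 (n : ℕ) (hn : 1 ≤ n) (Γ : Type) [CommGroup Γ] [IsCyclic Γ]
    (S : Finset Γ) (hScard : S.card = n * (n - 1) / 2)
    (hSprod : ∀ A B : Finset Γ, A ⊆ S → B ⊆ S → A.prod id = B.prod id → A = B)
    (γ : Sym2 (Fin n) → Γ)
    (hγS : ∀ u v : Fin n, u ≠ v → γ s(u, v) ∈ S)
    (hγ : ∀ a b c d : Fin n, a < b → c < d → (γ s(a, b) = γ s(c, d) ↔ b = d)) :
    ∀ (v : Fin n) (w : (completeGraph (Fin n)).Walk v v), w.IsCycle →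
      (upGain γ w = 1 ↔ Oscillating (walkEdges w)) := by
  classical
  intro v w hw
  set z : Fin n := ⟨0, hn⟩ with hzdef
  have hzle : ∀ a : Fin n, z ≤ a := fun a => by simp [hzdef, Fin.le_def]
  set g : Fin n → Γ := fun u => γ s(z, u) with hgdef
  have hg : ∀ a b : Fin n, a < b → γ s(a, b) = g b := by
    intro a b hab
    have hzb : z < b := lt_of_le_of_lt (hzle a) hab
    exact ((hγ z b a b hzb hab).mpr rfl).symm
  have hginj : ∀ u u' : Fin n, z < u → z < u' → g u = g u' → u = u' := by
    intro u u' hu hu' h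
    exact (hγ z u z u' hu hu').mp h
  have hgS : ∀ u : Fin n, z < u → g u ∈ S := fun u hu => hγS z u (ne_of_lt hu)
  -- structural facts about the cycle
  have htail : w.darts.map (fun d => d.toProd.2) = w.support.tail := w.map_snd_darts
  have hdrop : w.darts.map (fun d => d.toProd.1) = w.support.dropLast := w.map_fst_darts
  have htailnd : w.support.tail.Nodup := hw.support_nodup
  have hlen3 : 3 ≤ w.length := hw.three_le_length
  have htlen : w.support.tail.length = w.length := by
    have h1 := w.length_support
    have h2 : w.support.tail.length = w.support.length - 1 := by
      simp [List.length_tail]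
    omega
  have htne : w.support.tail ≠ [] := by
    intro h; rw [h] at htlen; simp at htlen; omega
  have hlastT : w.support.tail.getLast htne = v := by
    rw [List.getLast_tail]; exact w.getLast_support
  have hvT : v ∈ w.support.tail := by
    have h1 := List.getLast_mem htne
    rwa [hlastT] at h1
  have memT : ∀ u ∈ w.support, u ∈ w.support.tail := by
    intro u hu
    rw [w.support_eq_cons] at hu
    rcases List.mem_cons.mp hu with rfl | h
    · exact hvT
    · exact h
  have htdl : w.support.tail = w.support.tail.dropLast ++ [v] := by
    conv_lhs => rw [← List.dropLast_append_getLast htne]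
    rw [hlastT]
  have hvndl : v ∉ w.support.tail.dropLast := by
    have h1 := htailnd
    rw [htdl] at h1
    rcases List.nodup_append'.mp h1 with ⟨-, -, hdisj⟩
    intro hmem
    exact hdisj hmem (by simp)
  have hdldef : w.support.dropLast = v :: w.support.tail.dropLast := by
    conv_lhs => rw [w.support_eq_cons]
    exact List.dropLast_cons_of_ne_nil htne
  have hdropnd : w.support.dropLast.Nodup := by
    rw [hdldef]
    exact List.nodup_cons.mpr ⟨hvndl, htailnd.sublist (List.dropLast_sublist _)⟩
  have memD : ∀ u ∈ w.support, u ∈ w.support.dropLast := by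
    intro u hu
    rw [hdldef]
    rw [w.support_eq_cons] at hu
    rcases List.mem_cons.mp hu with rfl | h
    · exact List.mem_cons_self
    · rw [htdl] at h
      rcases List.mem_append.mp h with h | h
      · exact List.mem_cons_of_mem _ h
      · simp at h; subst h; exact List.mem_cons_self
  have sndInj : ∀ d1 ∈ w.darts, ∀ d2 ∈ w.darts, d1.toProd.2 = d2.toProd.2 → d1 = d2 :=
    List.inj_on_of_nodup_map (htail ▸ htailnd)
  have fstInj : ∀ d1 ∈ w.darts, ∀ d2 ∈ w.darts, d1.toProd.1 = d2.toProd.1 → d1 = d2 :=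
    List.inj_on_of_nodup_map (hdrop ▸ hdropnd)
  have edgeInj : ∀ d1 ∈ w.darts, ∀ d2 ∈ w.darts, d1.edge = d2.edge → d1 = d2 :=
    List.inj_on_of_nodup_map hw.edges_nodup
  have sndEx : ∀ u ∈ w.support, ∃ d ∈ w.darts, d.toProd.2 = u := by
    intro u hu
    have h1 : u ∈ w.darts.map (fun d => d.toProd.2) := htail ▸ memT u hu
    obtain ⟨d, hd, hdu⟩ := List.mem_map.mp h1
    exact ⟨d, hd, hdu⟩
  have fstEx : ∀ u ∈ w.support, ∃ d ∈ w.darts, d.toProd.1 = u := by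
    intro u hu
    have h1 : u ∈ w.darts.map (fun d => d.toProd.1) := hdrop ▸ memD u hu
    obtain ⟨d, hd, hdu⟩ := List.mem_map.mp h1
    exact ⟨d, hd, hdu⟩
  have cntIn : ∀ u : Fin n, (w.darts.filter fun d => d.toProd.2 = u).length ≤ 1 := by
    intro u
    rw [length_filter_eq_count w.darts (fun d => d.toProd.2) u, htail]
    exact List.nodup_iff_count_le_one.mp htailnd u
  have cntOut : ∀ u : Fin n, (w.darts.filter fun d => d.toProd.1 = u).length ≤ 1 := by
    intro u
    rw [length_filter_eq_count w.darts (fun d => d.toProd.1) u, hdrop]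
    exact List.nodup_iff_count_le_one.mp hdropnd u
  have hlistE : ∀ u : Fin n, listE w.darts u =
      ((w.darts.filter fun d => d.toProd.1 < d.toProd.2 ∧ d.toProd.2 = u).length : ℤ) -
      ((w.darts.filter fun d => d.toProd.2 < d.toProd.1 ∧ d.toProd.1 = u).length : ℤ) :=
    fun u => sum_map_ind _ _ _
  have hE0 : ∀ u, u ∉ w.support → listE w.darts u = 0 := by
    intro u hu
    rw [hlistE u]
    have h1 : (w.darts.filter fun d => d.toProd.1 < d.toProd.2 ∧ d.toProd.2 = u) = [] := by
      rw [List.filter_eq_nil_iff]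
      intro d hd
      simp only [decide_eq_true_eq]
      rintro ⟨-, rfl⟩
      exact hu (w.dart_snd_mem_support_of_mem_darts hd)
    have h2 : (w.darts.filter fun d => d.toProd.2 < d.toProd.1 ∧ d.toProd.1 = u) = [] := by
      rw [List.filter_eq_nil_iff]
      intro d hd
      simp only [decide_eq_true_eq]
      rintro ⟨-, rfl⟩
      exact hu (w.dart_fst_mem_support_of_mem_darts hd)
    rw [h1, h2]; simp
  have hEchar : ∀ u ∈ w.support, ∃ a b : Fin n,
      a ≠ b ∧ a ≠ u ∧ b ≠ u ∧ s(a, u) ∈ w.edges ∧ s(u, b) ∈ w.edges ∧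
      listE w.darts u = (if a < u then (1:ℤ) else 0) - (if b < u then (1:ℤ) else 0) ∧
      (∀ p : Fin n, s(u, p) ∈ w.edges → p = a ∨ p = b) := by
    intro u hu
    obtain ⟨din, hdin, hdinu⟩ := sndEx u hu
    obtain ⟨dout, hdout, hdoutu⟩ := fstEx u hu
    have hau : din.toProd.1 ≠ u := by
      have := din.adj; rw [hdinu] at this; exact this
    have hbu : dout.toProd.2 ≠ u := by
      have := dout.adj; rw [hdoutu] at this; exact fun h => this (h.symm ▸ rfl)
    have hdinedge : din.edge = s(din.toProd.1, u) := by rw [← hdinu]; rfl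
    have hdoutedge : dout.edge = s(u, dout.toProd.2) := by rw [← hdoutu]; rfl
    have hab : din.toProd.1 ≠ dout.toProd.2 := by
      intro h
      have hne : din ≠ dout := by
        intro heq
        rw [heq] at hdinu
        exact hbu hdinu
      apply hne
      apply edgeInj din hdin dout hdout
      rw [hdinedge, hdoutedge, ← h, Sym2.eq_swap]
    refine ⟨din.toProd.1, dout.toProd.2, hab, hau, hbu, ?_, ?_, ?_, ?_⟩
    · have h1 : din.edge ∈ w.edges := List.mem_map_of_mem hdin
      rwa [hdinedge] at h1
    · have h1 : dout.edge ∈ w.edges := List.mem_map_of_mem hdout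
      rwa [hdoutedge] at h1
    · have hAin : (w.darts.filter fun d => d.toProd.1 < d.toProd.2 ∧ d.toProd.2 = u).length
          = if din.toProd.1 < u then 1 else 0 := by
        by_cases hlt : din.toProd.1 < u
        · rw [if_pos hlt]
          have hmemf : din ∈
              (w.darts.filter fun d => d.toProd.1 < d.toProd.2 ∧ d.toProd.2 = u) := by
            rw [List.mem_filter]
            refine ⟨hdin, ?_⟩
            simp only [decide_eq_true_eq]
            exact ⟨by rw [hdinu]; exact hlt, hdinu⟩
          have h1 := List.length_pos_of_mem hmemf
          have h2 := length_filter_and_le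
            (fun d : (completeGraph (Fin n)).Dart => d.toProd.1 < d.toProd.2)
            (fun d => d.toProd.2 = u) w.darts
          have h3 := cntIn u
          omega
        · rw [if_neg hlt, List.length_eq_zero_iff, List.filter_eq_nil_iff]
          intro d hd
          simp only [decide_eq_true_eq]
          rintro ⟨hltd, hdu⟩
          have hdd : d = din := sndInj d hd din hdin (by rw [hdu, hdinu])
          subst hdd
          rw [hdu] at hltd
          exact hlt hltd
      have hAout : (w.darts.filter fun d => d.toProd.2 < d.toProd.1 ∧ d.toProd.1 = u).length
          = if dout.toProd.2 < u then 1 else 0 := by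
        by_cases hlt : dout.toProd.2 < u
        · rw [if_pos hlt]
          have hmemf : dout ∈
              (w.darts.filter fun d => d.toProd.2 < d.toProd.1 ∧ d.toProd.1 = u) := by
            rw [List.mem_filter]
            refine ⟨hdout, ?_⟩
            simp only [decide_eq_true_eq]
            exact ⟨by rw [hdoutu]; exact hlt, hdoutu⟩
          have h1 := List.length_pos_of_mem hmemf
          have h2 := length_filter_and_le
            (fun d : (completeGraph (Fin n)).Dart => d.toProd.2 < d.toProd.1)
            (fun d => d.toProd.1 = u) w.darts
          have h3 := cntOut u
          omega
        · rw [if_neg hlt, List.length_eq_zero_iff, List.filter_eq_nil_iff]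
          intro d hd
          simp only [decide_eq_true_eq]
          rintro ⟨hltd, hdu⟩
          have hdd : d = dout := fstInj d hd dout hdout (by rw [hdu, hdoutu])
          subst hdd
          rw [hdu] at hltd
          exact hlt hltd
      rw [hlistE u, hAin, hAout]
      by_cases h1 : din.toProd.1 < u <;> by_cases h2 : dout.toProd.2 < u <;>
        simp [h1, h2]
    · intro p hp
      obtain ⟨d, hd, hde⟩ := List.mem_map.mp hp
      have hde' : s(d.toProd.1, d.toProd.2) = s(u, p) := hde
      rw [Sym2.eq_iff] at hde'
      rcases hde' with ⟨h1, h2⟩ | ⟨h1, h2⟩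
      · right
        have hdd : d = dout := fstInj d hd dout hdout (by rw [h1, hdoutu])
        rw [← h2, hdd]
      · left
        have hdd : d = din := sndInj d hd din hdin (by rw [h2, hdinu])
        rw [← h1, hdd]
  have hupg : upGain γ w = ∏ u : Fin n, g u ^ listE w.darts u :=
    upGain_eq_prod γ g hg w.darts
  rw [hupg]
  constructor
  · intro h1
    have hf : ∀ u, listE w.darts u = 0 ∨ listE w.darts u = 1 ∨ listE w.darts u = -1 := by
      intro u
      by_cases hu : u ∈ w.support
      · obtain ⟨a, b, -, -, -, -, -, hE, -⟩ := hEchar u hu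
        rw [hE]
        by_cases ha : a < u <;> by_cases hb : b < u <;> simp [ha, hb]
      · left; exact hE0 u hu
    have hfP : ∀ u, listE w.darts u ≠ 0 → z < u := by
      intro u hne
      by_cases hu : u ∈ w.support
      · obtain ⟨a, b, -, -, -, -, -, hE, -⟩ := hEchar u hu
        rw [hE] at hne
        by_cases ha : a < u
        · exact lt_of_le_of_lt (hzle a) ha
        · by_cases hb : b < u
          · exact lt_of_le_of_lt (hzle b) hb
          · simp [ha, hb] at hne
      · exact absurd (hE0 u hu) hne
    have hzero := prod_zpow_eq_one_iff S hSprod g (fun u => listE w.darts u)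
      (fun u => z < u) (fun u hu => hgS u hu) (fun u u' hu hu' h => hginj u u' hu hu' h)
      hf hfP h1
    intro x p q hp hq hpq
    have hp' : s(x, p) ∈ w.edges := hp
    have hq' : s(x, q) ∈ w.edges := hq
    have hxp : x ≠ p := w.adj_of_mem_edges hp'
    have hxq : x ≠ q := w.adj_of_mem_edges hq'
    have hxs : x ∈ w.support := w.fst_mem_support_of_mem_edges hp'
    obtain ⟨a, b, -, -, -, -, -, hE, huniq⟩ := hEchar x hxs
    have hpab := huniq p hp'
    have hqab := huniq q hq'
    have hEx : listE w.darts x = 0 := hzero x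
    rw [hE] at hEx
    by_cases hax : a < x <;> by_cases hbx : b < x
    · right
      rcases hpab with rfl | rfl <;> rcases hqab with rfl | rfl
      · exact absurd rfl hpq
      · exact ⟨hax, hbx⟩
      · exact ⟨hbx, hax⟩
      · exact absurd rfl hpq
    · simp [hax, hbx] at hEx
    · simp [hax, hbx] at hEx
    · left
      rcases hpab with rfl | rfl <;> rcases hqab with rfl | rfl
      · exact absurd rfl hpq
      · exact ⟨lt_of_le_of_ne (le_of_not_gt hax) hxp, lt_of_le_of_ne (le_of_not_gt hbx) hxq⟩
      · exact ⟨lt_of_le_of_ne (le_of_not_gt hbx) hxp, lt_of_le_of_ne (le_of_not_gt hax) hxq⟩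
      · exact absurd rfl hpq
  · intro hosc
    have hall : ∀ u, listE w.darts u = 0 := by
      intro u
      by_cases hu : u ∈ w.support
      · obtain ⟨a, b, hab, hau, hbu, hae, hbe, hE, -⟩ := hEchar u hu
        have h1 : s(u, a) ∈ walkEdges w := by
          show s(u, a) ∈ w.edges
          rw [Sym2.eq_swap]; exact hae
        have h2 : s(u, b) ∈ walkEdges w := hbe
        rcases hosc h1 h2 hab with ⟨h3, h4⟩ | ⟨h3, h4⟩
        · rw [hE]; simp [asymm h3, asymm h4]
        · rw [hE]; simp [h3, h4]
      · exact hE0 u hu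
    calc ∏ u : Fin n, g u ^ listE w.darts u = ∏ u : Fin n, 1 := by
          refine Finset.prod_congr rfl fun u _ => ?_
          rw [hall u, zpow_zero]
      _ = 1 := Finset.prod_const_one

end Paper
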